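/- Let φ1, φ2, X1, X2 be positive reals and β ∈ (0,1]. Define U2(τ) = (1/2)·φ2·(X2 + τ) + (1/2)·√( φ1·φ2·(X1 − β·τ)·(X2 + τ) ) on (−X2, X1/β). If the derivative of U2 at τ = 0 is nonnegative, then the derivative of U2 at every τ ∈ (−X2, 0] is nonnegative. -/

import Mathlib

set_option maxHeartbeats 1000000

noncomputable section

/-- In Case 3, if Player 2's payoff derivative at `τ = 0` is nonnegative, it
remains nonnegative on all of `(-X2, 0]`. -/
theorem case3_payoff2_deriv_nonneg_persists (φ1 φ2 X1 X2 β : ℝ)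
    (hφ1 : 0 < φ1) (hφ2 : 0 < φ2) (hX1 : 0 < X1) (hX2 : 0 < X2)
    (hβ0 : 0 < β) (hβ1 : β ≤ 1)
    (h0 : 0 ≤ deriv (fun τ : ℝ => (1 / 2) * φ2 * (X2 + τ) +
        (1 / 2) * Real.sqrt (φ1 * φ2 * (X1 - β * τ) * (X2 + τ))) 0) :
    ∀ τ ∈ Set.Ioc (-X2) (0 : ℝ),
      0 ≤ deriv (fun τ : ℝ => (1 / 2) * φ2 * (X2 + τ) +
        (1 / 2) * Real.sqrt (φ1 * φ2 * (X1 - β * τ) * (X2 + τ))) τ := by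
  have hgpos : ∀ t : ℝ, -X2 < t → t ≤ 0 →
      0 < φ1 * φ2 * (X1 - β * t) * (X2 + t) := by
    intro t h1 h2
    have hx1 : 0 < X1 - β * t := by nlinarith
    have hx2 : 0 < X2 + t := by linarith
    positivity
  have key : ∀ t : ℝ, -X2 < t → t ≤ 0 →
      deriv (fun τ : ℝ => (1 / 2) * φ2 * (X2 + τ) +
        (1 / 2) * Real.sqrt (φ1 * φ2 * (X1 - β * τ) * (X2 + τ))) t =
      (1 / 2) * φ2 + (1 / 2) * (φ1 * φ2 * ((X1 - β * t) - β * (X2 + t)) /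
        (2 * Real.sqrt (φ1 * φ2 * (X1 - β * t) * (X2 + t)))) := by
    intro t h1 h2
    have hg := hgpos t h1 h2
    have h1' : HasDerivAt (fun x : ℝ => X1 - β * x) (-β) t := by
      simpa using ((hasDerivAt_id t).const_mul β).const_sub X1
    have h2' : HasDerivAt (fun x : ℝ => X2 + x) 1 t := by
      simpa using (hasDerivAt_id t).const_add X2
    have h3 : HasDerivAt (fun x : ℝ => φ1 * φ2 * (X1 - β * x) * (X2 + x))
        (φ1 * φ2 * ((X1 - β * t) - β * (X2 + t))) t := by
      have := ((h1'.mul h2').const_mul (φ1 * φ2))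
      convert this using 2 with x
      · rfl
      · rfl
      · simp only [Pi.mul_apply]; ring
      · ring
    have h4 : HasDerivAt (fun x : ℝ => Real.sqrt (φ1 * φ2 * (X1 - β * x) * (X2 + x)))
        (φ1 * φ2 * ((X1 - β * t) - β * (X2 + t)) /
          (2 * Real.sqrt (φ1 * φ2 * (X1 - β * t) * (X2 + t)))) t :=
      h3.sqrt (ne_of_gt hg)
    have h5 : HasDerivAt (fun x : ℝ => (1 / 2) * φ2 * (X2 + x))
        ((1 / 2) * φ2) t := by
      simpa using h2'.const_mul ((1 / 2) * φ2)
    exact (h5.add (h4.const_mul (1 / 2))).deriv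
  -- rewrite the hypothesis at 0
  rw [key 0 (by linarith) le_rfl] at h0
  simp only [mul_zero, sub_zero, add_zero] at h0
  set s0 := Real.sqrt (φ1 * φ2 * X1 * X2) with hs0def
  have hg0 : 0 < φ1 * φ2 * X1 * X2 := by positivity
  have hs0 : 0 < s0 := Real.sqrt_pos.mpr hg0
  have hs0sq : s0 ^ 2 = φ1 * φ2 * X1 * X2 := Real.sq_sqrt hg0.le
  have hH : φ1 * (β * X2 - X1) ≤ 2 * s0 := by
    have heq : (1 / 2) * φ2 + (1 / 2) * (φ1 * φ2 * (X1 - β * X2) / (2 * s0)) =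
        (2 * φ2 * s0 + φ1 * φ2 * (X1 - β * X2)) / (4 * s0) := by
      field_simp; ring
    rw [heq] at h0
    have hA : 0 ≤ 2 * φ2 * s0 + φ1 * φ2 * (X1 - β * X2) := by
      by_contra hc
      push_neg at hc
      have : (2 * φ2 * s0 + φ1 * φ2 * (X1 - β * X2)) / (4 * s0) < 0 :=
        div_neg_of_neg_of_pos hc (by positivity)
      linarith
    nlinarith [hA, hφ2, hs0]
  intro τ hτ
  obtain ⟨hτ1, hτ2⟩ := hτ
  rw [key τ hτ1 hτ2]
  have hg := hgpos τ hτ1 hτ2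
  set s := Real.sqrt (φ1 * φ2 * (X1 - β * τ) * (X2 + τ)) with hsdef
  have hs : 0 < s := Real.sqrt_pos.mpr hg
  have hssq : s ^ 2 = φ1 * φ2 * (X1 - β * τ) * (X2 + τ) := Real.sq_sqrt hg.le
  have hG : φ1 * (β * X2 - X1 + 2 * β * τ) ≤ 2 * s := by
    rcases le_or_gt (β * X2 - X1 + 2 * β * τ) 0 with hN | hN
    · have : φ1 * (β * X2 - X1 + 2 * β * τ) ≤ 0 :=
        mul_nonpos_of_nonneg_of_nonpos hφ1.le hN
      linarith
    · -- here β*X2 - X1 > 0 since 2*β*τ ≤ 0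
      have hβτ : β * τ ≤ 0 := mul_nonpos_of_nonneg_of_nonpos hβ0.le hτ2
      have hBX : 0 < β * X2 - X1 := by linarith
      have hf0 : (φ1 * (β * X2 - X1)) ^ 2 ≤ 4 * (φ1 * φ2 * X1 * X2) := by
        have h1 : 0 ≤ φ1 * (β * X2 - X1) := by positivity
        nlinarith [hH, hs0, hs0sq]
      have hterm : 0 ≤ τ * (X1 - β * X2 - β * τ) := by
        have h1 : X1 - β * X2 - β * τ ≤ 0 := by linarith
        nlinarith [mul_nonneg (neg_nonneg.mpr hτ2) (neg_nonneg.mpr h1)]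
      have hsq : (φ1 * (β * X2 - X1 + 2 * β * τ)) ^ 2 ≤ (2 * s) ^ 2 := by
        have hterm' : 0 ≤ φ1 * (φ2 + φ1 * β) * (τ * (X1 - β * X2 - β * τ)) := by
          have : 0 < φ1 * (φ2 + φ1 * β) := by positivity
          exact mul_nonneg this.le hterm
        nlinarith [hf0, hterm', hssq]
      nlinarith [hsq, hs, mul_pos hφ1 hN]
  have heq : (1 / 2) * φ2 + (1 / 2) * (φ1 * φ2 * ((X1 - β * τ) - β * (X2 + τ)) / (2 * s)) =
      (2 * φ2 * s + φ1 * φ2 * ((X1 - β * τ) - β * (X2 + τ))) / (4 * s) := by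
    field_simp; ring
  rw [heq]
  apply div_nonneg _ (by positivity)
  nlinarith [hG, hφ2, hs]
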